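/- Let (H₋, H₊, Γ₋, Γ₊) be a boundary quadruple for a densely defined skew-symmetric operator A₀ on a Hilbert space V, and let A = (−A₀)*. For every x₋ ∈ Γ₋D(A) and every x₊ ∈ Γ₊D(A) there exists w ∈ D(A) such that Γ₋w = x₋ and Γ₊w = x₊ (interpolation property). -/
import Mathlib


variable {𝕜 V : Type*} [RCLike 𝕜] [NormedAddCommGroup V] [InnerProductSpace 𝕜 V]
  [CompleteSpace V]

/-- An operator `A` on `V` is *skew-symmetric* if `⟪Au, v⟫ + ⟪u, Av⟫ = 0` for all
`u, v ∈ D(A)`. -/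
def SkewSymmetric (A : V →ₗ.[𝕜] V) : Prop :=
  ∀ u v : A.domain, @inner 𝕜 _ _ (A u) (v : V) + @inner 𝕜 _ _ (u : V) (A v) = 0

/-- A *boundary quadruple* `(H₋, H₊, Γ₋, Γ₊)` for a densely defined skew-symmetric operator
`A₀` (here expressed via `A := (-A₀)*`) consists of pre-Hilbert spaces `H₋, H₊` and surjective
linear maps `Γ₋ : D(A) → H₋`, `Γ₊ : D(A) → H₊` such that
`⟪Au, v⟫ + ⟪u, Av⟫ = ⟪Γ₊u, Γ₊v⟫ - ⟪Γ₋u, Γ₋v⟫` for all `u, v ∈ D(A)` and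
`ker Γ₋ + ker Γ₊ = D(A)`. -/
def IsBoundaryQuadruple (A : V →ₗ.[𝕜] V) {Hm Hp : Type*}
    [NormedAddCommGroup Hm] [InnerProductSpace 𝕜 Hm]
    [NormedAddCommGroup Hp] [InnerProductSpace 𝕜 Hp]
    (Γm : A.domain →ₗ[𝕜] Hm) (Γp : A.domain →ₗ[𝕜] Hp) : Prop :=
  Function.Surjective Γm ∧ Function.Surjective Γp ∧
    (∀ u v : A.domain,
      @inner 𝕜 _ _ (A u) (v : V) + @inner 𝕜 _ _ (u : V) (A v) =
        @inner 𝕜 _ _ (Γp u) (Γp v) - @inner 𝕜 _ _ (Γm u) (Γm v)) ∧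
    LinearMap.ker Γm ⊔ LinearMap.ker Γp = ⊤

/-- **Interpolation property**: given a boundary quadruple `(H₋, H₊, Γ₋, Γ₊)` for a densely
defined skew-symmetric operator `A₀`, for every `x₋ ∈ H₋ = Γ₋ D(A)` and `x₊ ∈ H₊ = Γ₊ D(A)`
there exists `w ∈ D(A)` with `Γ₋ w = x₋` and `Γ₊ w = x₊`. -/
theorem boundaryQuadruple_interpolation {Hm Hp : Type*}
    [NormedAddCommGroup Hm] [InnerProductSpace 𝕜 Hm]
    [NormedAddCommGroup Hp] [InnerProductSpace 𝕜 Hp]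
    (A₀ : V →ₗ.[𝕜] V) (hdense : Dense (A₀.domain : Set V)) (hskew : SkewSymmetric A₀)
    (Γm : ((-A₀).adjoint).domain →ₗ[𝕜] Hm) (Γp : ((-A₀).adjoint).domain →ₗ[𝕜] Hp)
    (hq : IsBoundaryQuadruple (-A₀).adjoint Γm Γp) :
    ∀ (xm : Hm) (xp : Hp), ∃ w : ((-A₀).adjoint).domain, Γm w = xm ∧ Γp w = xp := by
  obtain ⟨hm, hp, -, hsup⟩ := hq
  intro xm xp
  obtain ⟨u, hu⟩ := hm xm
  obtain ⟨v, hv⟩ := hp xp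
  have hu' : u ∈ LinearMap.ker Γm ⊔ LinearMap.ker Γp := hsup ▸ Submodule.mem_top
  have hv' : v ∈ LinearMap.ker Γm ⊔ LinearMap.ker Γp := hsup ▸ Submodule.mem_top
  obtain ⟨a, ha, b, hb, hab⟩ := Submodule.mem_sup.mp hu'
  obtain ⟨c, hc, d, hd, hcd⟩ := Submodule.mem_sup.mp hv'
  refine ⟨b + c, ?_, ?_⟩
  · have : Γm a + Γm b = xm := by rw [← map_add, hab, hu]
    simp only [LinearMap.mem_ker.mp ha, zero_add] at this
    simp [map_add, this, LinearMap.mem_ker.mp hc]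
  · have : Γp c + Γp d = xp := by rw [← map_add, hcd, hv]
    simp only [LinearMap.mem_ker.mp hd, add_zero] at this
    simp [map_add, this, LinearMap.mem_ker.mp hb]
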